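/- arXiv:1711.07524 — 2 statements merged into one kernel-verified Lean document; each statement's English description precedes it below -/
import Mathlib

section
/- (Bollobás) Let a, b ≥ 1 and let (A₁,B₁), …, (A_m,B_m) be pairs of finite sets with |A_i| = a and |B_i| = b for every i, such that A_i ∩ B_j = ∅ if and only if i = j. Then m ≤ binom(a+b, a). -/
open Finset

section BollobasAux

variable {γ : Type*} [LinearOrder γ]

lemma bollobas_recon_A {a b : ℕ} {T₁ T₂ U₁ U₂ : Finset γ} (hT : T₁ = T₂) (hU : U₁ = U₂)
    (h₁ : T₁.card = a + b) (h₂ : T₂.card = a + b) (hu₁ : U₁.card = a) (hu₂ : U₂.card = a)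
    {z₁ z₂ : γ} (hz₁ : z₁ ∈ U₁) (hz₂ : z₂ ∈ U₂)
    (heq : (T₁.orderIsoOfFin h₁ (Fin.castAdd b ((U₁.orderIsoOfFin hu₁).symm ⟨z₁, hz₁⟩)) : γ)
      = (T₂.orderIsoOfFin h₂ (Fin.castAdd b ((U₂.orderIsoOfFin hu₂).symm ⟨z₂, hz₂⟩)) : γ)) :
    z₁ = z₂ := by
  subst hT; subst hU
  have h3 : (T₁.orderIsoOfFin h₁ (Fin.castAdd b ((U₁.orderIsoOfFin hu₁).symm ⟨z₁, hz₁⟩)))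
      = (T₁.orderIsoOfFin h₁ (Fin.castAdd b ((U₁.orderIsoOfFin hu₁).symm ⟨z₂, hz₂⟩))) :=
    Subtype.coe_injective heq
  have h4 := (T₁.orderIsoOfFin h₁).injective h3
  have h5 : ((U₁.orderIsoOfFin hu₁).symm ⟨z₁, hz₁⟩) = ((U₁.orderIsoOfFin hu₁).symm ⟨z₂, hz₂⟩) :=
    Fin.ext (by simpa using congrArg Fin.val h4)
  have h6 := (U₁.orderIsoOfFin hu₁).symm.injective h5
  exact congrArg Subtype.val h6

lemma bollobas_recon_B {a b : ℕ} {T₁ T₂ V₁ V₂ : Finset γ} (hT : T₁ = T₂) (hV : V₁ = V₂)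
    (h₁ : T₁.card = a + b) (h₂ : T₂.card = a + b) (hv₁ : V₁.card = b) (hv₂ : V₂.card = b)
    {z₁ z₂ : γ} (hz₁ : z₁ ∈ V₁) (hz₂ : z₂ ∈ V₂)
    (heq : (T₁.orderIsoOfFin h₁ (Fin.natAdd a ((V₁.orderIsoOfFin hv₁).symm ⟨z₁, hz₁⟩)) : γ)
      = (T₂.orderIsoOfFin h₂ (Fin.natAdd a ((V₂.orderIsoOfFin hv₂).symm ⟨z₂, hz₂⟩)) : γ)) :
    z₁ = z₂ := by
  subst hT; subst hV
  have h3 : (T₁.orderIsoOfFin h₁ (Fin.natAdd a ((V₁.orderIsoOfFin hv₁).symm ⟨z₁, hz₁⟩)))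
      = (T₁.orderIsoOfFin h₁ (Fin.natAdd a ((V₁.orderIsoOfFin hv₁).symm ⟨z₂, hz₂⟩))) :=
    Subtype.coe_injective heq
  have h4 := (T₁.orderIsoOfFin h₁).injective h3
  have h5 : ((V₁.orderIsoOfFin hv₁).symm ⟨z₁, hz₁⟩) = ((V₁.orderIsoOfFin hv₁).symm ⟨z₂, hz₂⟩) :=
    Fin.ext (by simpa using congrArg Fin.val h4)
  have h6 := (V₁.orderIsoOfFin hv₁).symm.injective h5
  exact congrArg Subtype.val h6

variable {β : Type*} [DecidableEq β] [Fintype β]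

/-- The "sorting" map on embeddings: rearrange the values on `SA ∪ SB` so that the values on
`SA` come first (in order), then the values on `SB`. -/
noncomputable def bolPhi (a b : ℕ) (SA SB : Finset β) (hSA : SA.card = a) (hSB : SB.card = b)
    (hd : Disjoint SA SB) (e : β ↪ γ) : β → γ := fun x =>
  if hx : x ∈ SA then
    (((SA ∪ SB).map e).orderIsoOfFin
      (by rw [card_map, card_union_of_disjoint hd, hSA, hSB])
      (Fin.castAdd b (((SA.map e).orderIsoOfFin (by rw [card_map, hSA])).symm
        ⟨e x, mem_map_of_mem e hx⟩)) : γ)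
  else if hx' : x ∈ SB then
    (((SA ∪ SB).map e).orderIsoOfFin
      (by rw [card_map, card_union_of_disjoint hd, hSA, hSB])
      (Fin.natAdd a (((SB.map e).orderIsoOfFin (by rw [card_map, hSB])).symm
        ⟨e x, mem_map_of_mem e hx'⟩)) : γ)
  else e x

theorem bollobas_step [Fintype γ] (a b : ℕ) (SA SB : Finset β)
    (hSA : SA.card = a) (hSB : SB.card = b) (hd : Disjoint SA SB)
    (P : Finset (β ↪ γ))
    (hP : ∀ e : β ↪ γ, (∀ x ∈ SA, ∀ y ∈ SB, e x < e y) → e ∈ P) :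
    Fintype.card (β ↪ γ) ≤ (a + b).choose a * P.card := by
  classical
  set φ := fun e : β ↪ γ => bolPhi a b SA SB hSA hSB hd e with hφ
  -- basic facts about φ
  have hT : ∀ e : β ↪ γ, ((SA ∪ SB).map e).card = a + b := fun e => by
    rw [card_map, card_union_of_disjoint hd, hSA, hSB]
  have hmemT : ∀ (e : β ↪ γ) (x : β), x ∈ SA ∪ SB → φ e x ∈ (SA ∪ SB).map e := by
    intro e x hx
    rcases mem_union.mp hx with h | h
    · simp only [hφ, bolPhi, dif_pos h]
      exact Subtype.coe_prop _
    · by_cases h' : x ∈ SA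
      · simp only [hφ, bolPhi, dif_pos h']; exact Subtype.coe_prop _
      · simp only [hφ, bolPhi, dif_neg h', dif_pos h]; exact Subtype.coe_prop _
  have hout : ∀ (e : β ↪ γ) (x : β), x ∉ SA ∪ SB → φ e x = e x := by
    intro e x hx
    rw [mem_union] at hx
    push_neg at hx
    simp only [hφ, bolPhi, dif_neg hx.1, dif_neg hx.2]
  -- injectivity of φ e
  have hinj : ∀ e : β ↪ γ, Function.Injective (φ e) := by
    intro e x y hxy
    by_cases hx : x ∈ SA ∪ SB
    · by_cases hy : y ∈ SA ∪ SB
      · -- both inside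
        rcases mem_union.mp hx with hxa | hxb
        · rcases mem_union.mp hy with hya | hyb
          · -- A A
            simp only [hφ, bolPhi, dif_pos hxa, dif_pos hya] at hxy
            have := bollobas_recon_A (γ := γ) rfl rfl (hT e) (hT e)
              (by rw [card_map, hSA]) (by rw [card_map, hSA])
              (mem_map_of_mem e hxa) (mem_map_of_mem e hya) hxy
            exact e.injective this
          · -- A B : contradiction
            have hyb' : y ∉ SA := fun h => (disjoint_left.mp hd h) hyb
            simp only [hφ, bolPhi, dif_pos hxa, dif_neg hyb', dif_pos hyb] at hxy
            have h3 := (((SA ∪ SB).map e).orderIsoOfFin (hT e)).injective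
              (Subtype.coe_injective hxy)
            have := congrArg Fin.val h3
            simp only [Fin.coe_castAdd, Fin.coe_natAdd] at this
            have hlt : ((((SA.map e).orderIsoOfFin (by rw [card_map, hSA])).symm
                ⟨e x, mem_map_of_mem e hxa⟩ : Fin a) : ℕ) < a := Fin.is_lt _
            omega
        · rcases mem_union.mp hy with hya | hyb
          · -- B A : contradiction
            have hxb' : x ∉ SA := fun h => (disjoint_left.mp hd h) hxb
            simp only [hφ, bolPhi, dif_neg hxb', dif_pos hxb, dif_pos hya] at hxy
            have h3 := (((SA ∪ SB).map e).orderIsoOfFin (hT e)).injective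
              (Subtype.coe_injective hxy)
            have := congrArg Fin.val h3
            simp only [Fin.coe_castAdd, Fin.coe_natAdd] at this
            have hlt : ((((SA.map e).orderIsoOfFin (by rw [card_map, hSA])).symm
                ⟨e y, mem_map_of_mem e hya⟩ : Fin a) : ℕ) < a := Fin.is_lt _
            omega
          · -- B B
            have hxb' : x ∉ SA := fun h => (disjoint_left.mp hd h) hxb
            have hyb' : y ∉ SA := fun h => (disjoint_left.mp hd h) hyb
            simp only [hφ, bolPhi, dif_neg hxb', dif_pos hxb, dif_neg hyb', dif_pos hyb] at hxy
            have := bollobas_recon_B (γ := γ) rfl rfl (hT e) (hT e)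
              (by rw [card_map, hSB]) (by rw [card_map, hSB])
              (mem_map_of_mem e hxb) (mem_map_of_mem e hyb) hxy
            exact e.injective this
      · exfalso
        have h1 : φ e x ∈ (SA ∪ SB).map e := hmemT e x hx
        rw [hxy, hout e y hy] at h1
        exact hy ((Finset.mem_map' e).mp h1)
    · by_cases hy : y ∈ SA ∪ SB
      · exfalso
        have h1 : φ e y ∈ (SA ∪ SB).map e := hmemT e y hy
        rw [← hxy, hout e x hx] at h1
        exact hx ((Finset.mem_map' e).mp h1)
      · rw [hout e x hx, hout e y hy] at hxy
        exact e.injective hxy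
  set Φ : (β ↪ γ) → (β ↪ γ) := fun e => ⟨φ e, hinj e⟩ with hΦ
  -- Φ lands in P
  have hmaps : ∀ e : β ↪ γ, Φ e ∈ P := by
    intro e
    apply hP
    intro x hxa y hyb
    have hyb' : y ∉ SA := fun h => (disjoint_left.mp hd h) hyb
    show φ e x < φ e y
    simp only [hφ, bolPhi, dif_pos hxa, dif_neg hyb', dif_pos hyb]
    rw [Subtype.coe_lt_coe]
    apply (((SA ∪ SB).map e).orderIsoOfFin (hT e)).strictMono
    rw [Fin.lt_def]
    simp only [Fin.coe_castAdd, Fin.coe_natAdd]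
    have := Fin.is_lt (((SA.map e).orderIsoOfFin (by rw [card_map, hSA])).symm
      ⟨e x, mem_map_of_mem e hxa⟩)
    omega
  -- T is preserved by Φ
  have hTpres : ∀ e : β ↪ γ, (SA ∪ SB).map (Φ e) = (SA ∪ SB).map e := by
    intro e
    apply eq_of_subset_of_card_le
    · intro z hz
      rcases mem_map.mp hz with ⟨x, hx, rfl⟩
      exact hmemT e x hx
    · rw [card_map, card_map]
  -- fiber bound
  have hfiber : ∀ e₀ ∈ P, ((univ : Finset (β ↪ γ)).filter fun e => Φ e = e₀).card
      ≤ (a + b).choose a := by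
    intro e₀ _
    by_cases hne : ((univ : Finset (β ↪ γ)).filter fun e => Φ e = e₀).Nonempty
    · obtain ⟨e', he'⟩ := hne
      have he'0 : Φ e' = e₀ := (mem_filter.mp he').2
      have hT₀ : ((SA ∪ SB).map e₀).card = a + b := by
        rw [← he'0, hTpres e', hT e']
      have hcard : (((SA ∪ SB).map e₀).powersetCard a).card = (a + b).choose a := by
        rw [card_powersetCard, hT₀]
      rw [← hcard]
      apply card_le_card_of_injOn (fun e => SA.map e)
      · -- maps to powersetCard
        intro e he
        have he0 : Φ e = e₀ := (mem_filter.mp he).2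
        rw [Finset.mem_coe, mem_powersetCard]
        constructor
        · rw [← he0, hTpres e]
          exact map_subset_map.mpr subset_union_left
        · rw [card_map, hSA]
      · -- injective on fiber
        intro e₁ he₁ e₂ he₂ hU12'
        have hU12 : SA.map e₁ = SA.map e₂ := hU12'
        have h₁0 : Φ e₁ = e₀ := (mem_filter.mp he₁).2
        have h₂0 : Φ e₂ = e₀ := (mem_filter.mp he₂).2
        have hT12 : (SA ∪ SB).map e₁ = (SA ∪ SB).map e₂ := by
          rw [← hTpres e₁, ← hTpres e₂, h₁0, h₂0]
        have hφ12 : ∀ x, φ e₁ x = φ e₂ x := by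
          intro x
          have : Φ e₁ x = Φ e₂ x := by rw [h₁0, h₂0]
          exact this
        apply Function.Embedding.ext
        intro x
        by_cases hxa : x ∈ SA
        · have h := hφ12 x
          simp only [hφ, bolPhi, dif_pos hxa] at h
          exact bollobas_recon_A (γ := γ) hT12 hU12 (hT e₁) (hT e₂)
            (by rw [card_map, hSA]) (by rw [card_map, hSA])
            (mem_map_of_mem e₁ hxa) (mem_map_of_mem e₂ hxa) h
        · by_cases hxb : x ∈ SB
          · have hV12 : SB.map e₁ = SB.map e₂ := by
              have hdm : ∀ e : β ↪ γ, Disjoint (SA.map e) (SB.map e) :=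
                fun e => (disjoint_map e).mpr hd
              have hu : ∀ e : β ↪ γ, (SA ∪ SB).map e = SA.map e ∪ SB.map e :=
                fun e => map_union (f := e) SA SB
              have h1 : SB.map e₁ = ((SA ∪ SB).map e₁) \ (SA.map e₁) := by
                rw [hu e₁, union_sdiff_cancel_left (hdm e₁)]
              have h2 : SB.map e₂ = ((SA ∪ SB).map e₂) \ (SA.map e₂) := by
                rw [hu e₂, union_sdiff_cancel_left (hdm e₂)]
              rw [h1, h2, hT12, hU12]
            have h := hφ12 x
            simp only [hφ, bolPhi, dif_neg hxa, dif_pos hxb] at h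
            exact bollobas_recon_B (γ := γ) hT12 hV12 (hT e₁) (hT e₂)
              (by rw [card_map, hSB]) (by rw [card_map, hSB])
              (mem_map_of_mem e₁ hxb) (mem_map_of_mem e₂ hxb) h
          · have h := hφ12 x
            have hx : x ∉ SA ∪ SB := by
              rw [mem_union]; push_neg; exact ⟨hxa, hxb⟩
            rw [hout e₁ x hx, hout e₂ x hx] at h
            exact h
    · rw [not_nonempty_iff_eq_empty] at hne
      rw [hne]
      simp
  rw [← Finset.card_univ]
  exact card_le_mul_card_image_of_maps_to (fun e _ => hmaps e) _ hfiber

end BollobasAux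

theorem bollobas_set_pairs {α : Type*} [DecidableEq α] (a b m : ℕ)
    (ha : 1 ≤ a) (hb : 1 ≤ b) (A B : Fin m → Finset α)
    (hA : ∀ i, (A i).card = a) (hB : ∀ i, (B i).card = b)
    (hcross : ∀ i j, A i ∩ B j = ∅ ↔ i = j) :
    m ≤ (a + b).choose a := by
  classical
  set S : Finset α := Finset.univ.biUnion (fun i => A i ∪ B i) with hS
  set n := S.card with hn
  have hAS : ∀ i, A i ⊆ S := fun i x hx =>
    mem_biUnion.mpr ⟨i, mem_univ i, mem_union_left _ hx⟩
  have hBS : ∀ i, B i ⊆ S := fun i x hx =>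
    mem_biUnion.mpr ⟨i, mem_univ i, mem_union_right _ hx⟩
  set SA : Fin m → Finset ↥S := fun i => (A i).subtype (· ∈ S) with hSAdef
  set SB : Fin m → Finset ↥S := fun i => (B i).subtype (· ∈ S) with hSBdef
  have hSA : ∀ i, (SA i).card = a := by
    intro i
    rw [hSAdef]
    simp only [Finset.card_subtype]
    rw [filter_true_of_mem (fun x hx => hAS i hx), hA]
  have hSB : ∀ i, (SB i).card = b := by
    intro i
    rw [hSBdef]
    simp only [Finset.card_subtype]
    rw [filter_true_of_mem (fun x hx => hBS i hx), hB]
  have hd : ∀ i, Disjoint (SA i) (SB i) := by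
    intro i
    rw [disjoint_left]
    intro x hxa hxb
    rw [hSAdef, mem_subtype] at hxa
    rw [hSBdef, mem_subtype] at hxb
    have : (x : α) ∈ A i ∩ B i := mem_inter.mpr ⟨hxa, hxb⟩
    rw [(hcross i i).mpr rfl] at this
    exact absurd this (notMem_empty _)
  -- the families of "good orderings"
  set P : Fin m → Finset (↥S ↪ Fin n) := fun i =>
    (univ : Finset (↥S ↪ Fin n)).filter
      (fun e => ∀ x ∈ SA i, ∀ y ∈ SB i, e x < e y) with hPdef
  have hstep : ∀ i, Fintype.card (↥S ↪ Fin n) ≤ (a + b).choose a * (P i).card := by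
    intro i
    exact bollobas_step a b (SA i) (SB i) (hSA i) (hSB i) (hd i) (P i)
      (fun e he => mem_filter.mpr ⟨mem_univ e, he⟩)
  -- P i are pairwise disjoint
  have hPdisj : ∀ i ∈ (univ : Finset (Fin m)), ∀ j ∈ (univ : Finset (Fin m)),
      i ≠ j → Disjoint (P i) (P j) := by
    intro i _ j _ hij
    rw [disjoint_left]
    intro e hei hej
    have hAiBj : (A i ∩ B j).Nonempty := by
      rw [nonempty_iff_ne_empty]
      exact fun h => hij ((hcross i j).mp h)
    have hAjBi : (A j ∩ B i).Nonempty := by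
      rw [nonempty_iff_ne_empty]
      exact fun h => hij.symm ((hcross j i).mp h)
    obtain ⟨x, hx⟩ := hAiBj
    obtain ⟨y, hy⟩ := hAjBi
    rw [mem_inter] at hx hy
    have hxS : x ∈ S := hAS i hx.1
    have hyS : y ∈ S := hAS j hy.1
    have h1 := (mem_filter.mp hei).2 ⟨x, hxS⟩ (mem_subtype.mpr hx.1) ⟨y, hyS⟩
      (mem_subtype.mpr hy.2)
    have h2 := (mem_filter.mp hej).2 ⟨y, hyS⟩ (mem_subtype.mpr hy.1) ⟨x, hxS⟩
      (mem_subtype.mpr hx.2)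
    exact lt_asymm h1 h2
  have hsum : ∑ i : Fin m, (P i).card ≤ Fintype.card (↥S ↪ Fin n) := by
    rw [← card_biUnion hPdisj]
    rw [← Finset.card_univ]
    exact card_le_card (subset_univ _)
  have hFpos : 0 < Fintype.card (↥S ↪ Fin n) := by
    have : Nonempty (↥S ↪ Fin n) :=
      ⟨(Fintype.equivFinOfCardEq (Fintype.card_coe S)).toEmbedding⟩
    exact Fintype.card_pos
  have hmain : m * Fintype.card (↥S ↪ Fin n) ≤ (a + b).choose a * Fintype.card (↥S ↪ Fin n) := by
    calc m * Fintype.card (↥S ↪ Fin n)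
        = ∑ _i : Fin m, Fintype.card (↥S ↪ Fin n) := by
          rw [Finset.sum_const, card_univ, Fintype.card_fin, smul_eq_mul]
      _ ≤ ∑ i : Fin m, (a + b).choose a * (P i).card := Finset.sum_le_sum fun i _ => hstep i
      _ = (a + b).choose a * ∑ i : Fin m, (P i).card := by rw [Finset.mul_sum]
      _ ≤ (a + b).choose a * Fintype.card (↥S ↪ Fin n) :=
          Nat.mul_le_mul_left _ hsum
  exact Nat.le_of_mul_le_mul_right hmain hFpos
end

section
/- (Tuza) Let a, b ≥ 1 and let (A₁,B₁), …, (A_m,B_m) be pairs of finite sets with |A_i| = a, |B_i| = b and A_i ∩ B_i = ∅ for every i, such that for every i ≠ j at least one of A_i ∩ B_j ≠ ∅ or A_j ∩ B_i ≠ ∅ holds. Then m ≤ (a+b)^{a+b} / (a^a · b^b). -/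
open Finset

theorem tuza_weakly_cross_intersecting {α : Type*} [DecidableEq α] (a b m : ℕ)
    (ha : 1 ≤ a) (hb : 1 ≤ b) (A B : Fin m → Finset α)
    (hA : ∀ i, (A i).card = a) (hB : ∀ i, (B i).card = b)
    (hdisj : ∀ i, A i ∩ B i = ∅)
    (hweak : ∀ i j, i ≠ j → (A i ∩ B j).Nonempty ∨ (A j ∩ B i).Nonempty) :
    (m : ℝ) ≤ (a + b : ℝ) ^ (a + b) / ((a : ℝ) ^ a * (b : ℝ) ^ b) := by
  have ha' : (0:ℝ) < a := by exact_mod_cast ha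
  have hb' : (0:ℝ) < b := by exact_mod_cast hb
  have hs : (0:ℝ) < (a:ℝ) + b := by linarith
  set p : ℝ := a / ((a:ℝ)+b) with hpdef
  set q : ℝ := b / ((a:ℝ)+b) with hqdef
  have hp0 : 0 ≤ p := by positivity
  have hq0 : 0 ≤ q := by positivity
  have hpq : p + q = 1 := by rw [hpdef, hqdef, ← add_div, div_self hs.ne']
  -- key sum identity
  have key : ∀ Y : Finset α, ∑ T ∈ Y.powerset, p ^ T.card * q ^ (Y.card - T.card) = 1 := by
    intro Y
    have h1 := Finset.prod_add (fun _ : α => p) (fun _ : α => q) Y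
    simp only [prod_const] at h1
    rw [hpq, one_pow] at h1
    rw [show (∑ T ∈ Y.powerset, p ^ T.card * q ^ (Y.card - T.card))
        = ∑ T ∈ Y.powerset, p ^ T.card * q ^ ((Y \ T).card) from
      sum_congr rfl fun T hT => by rw [card_sdiff_of_subset (mem_powerset.1 hT)], ← h1]
  -- ground set
  set X : Finset α := Finset.univ.biUnion (fun i => A i ∪ B i) with hX
  have hAX : ∀ i, A i ⊆ X := fun i x hx =>
    mem_biUnion.2 ⟨i, mem_univ i, mem_union_left _ hx⟩
  have hBX : ∀ i, B i ⊆ X := fun i x hx =>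
    mem_biUnion.2 ⟨i, mem_univ i, mem_union_right _ hx⟩
  set f : Finset α → ℝ := fun R => p ^ R.card * q ^ (X.card - R.card) with hf
  set S : Fin m → Finset (Finset α) := fun i =>
    X.powerset.filter (fun R => A i ⊆ R ∧ Disjoint (B i) R) with hS
  have hdisjAB : ∀ i, Disjoint (A i) (B i) := fun i =>
    disjoint_iff_inter_eq_empty.2 (hdisj i)
  -- each S i sums to p^a * q^b
  have hSsum : ∀ i, ∑ R ∈ S i, f R = p ^ a * q ^ b := by
    intro i
    set Y : Finset α := X \ (A i ∪ B i) with hY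
    have hmemY : ∀ x, x ∈ Y ↔ x ∈ X ∧ x ∉ A i ∧ x ∉ B i := by
      intro x
      rw [hY, mem_sdiff, mem_union]
      tauto
    have hcardAB : (A i ∪ B i).card = a + b := by
      rw [card_union_of_disjoint (hdisjAB i), hA, hB]
    have hABX : A i ∪ B i ⊆ X := union_subset (hAX i) (hBX i)
    have hYcard : Y.card = X.card - (a + b) := by
      rw [hY, card_sdiff_of_subset hABX, hcardAB]
    have hab : a + b ≤ X.card := hcardAB ▸ card_le_card hABX
    calc ∑ R ∈ S i, f R
        = ∑ T ∈ Y.powerset, f (A i ∪ T) := by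
          apply Finset.sum_nbij' (fun R => R \ A i) (fun T => A i ∪ T)
          · intro R hR
            simp only [hS, mem_filter, mem_powerset] at hR
            rw [mem_powerset]
            intro x hx
            rw [mem_sdiff] at hx
            exact (hmemY x).2 ⟨hR.1 hx.1, hx.2, fun hB' =>
              disjoint_left.1 hR.2.2 hB' hx.1⟩
          · intro T hT
            rw [mem_powerset] at hT
            simp only [hS, mem_filter, mem_powerset]
            refine ⟨union_subset (hAX i) (fun x hx => ((hmemY x).1 (hT hx)).1),
              subset_union_left, ?_⟩
            rw [disjoint_union_right]
            exact ⟨(hdisjAB i).symm,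
              disjoint_left.2 fun x hxB hxT => ((hmemY x).1 (hT hxT)).2.2 hxB⟩
          · intro R hR
            simp only [hS, mem_filter] at hR
            exact union_sdiff_of_subset hR.2.1
          · intro T hT
            rw [mem_powerset] at hT
            exact union_sdiff_cancel_left
              (disjoint_left.2 fun x hxA hxT => ((hmemY x).1 (hT hxT)).2.1 hxA)
          · intro R hR
            simp only [hS, mem_filter] at hR
            rw [union_sdiff_of_subset hR.2.1]
      _ = ∑ T ∈ Y.powerset, (p ^ a * q ^ b) * (p ^ T.card * q ^ (Y.card - T.card)) := by
          apply sum_congr rfl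
          intro T hT
          rw [mem_powerset] at hT
          have hTA : Disjoint (A i) T :=
            disjoint_left.2 fun x hxA hxT => ((hmemY x).1 (hT hxT)).2.1 hxA
          have hcard : (A i ∪ T).card = a + T.card := by
            rw [card_union_of_disjoint hTA, hA]
          have hTle : T.card ≤ Y.card := card_le_card hT
          have hexp : X.card - (a + T.card) = b + (Y.card - T.card) := by omega
          rw [hf]
          simp only [hcard, hexp, pow_add]
          ring
      _ = p ^ a * q ^ b := by rw [← mul_sum, key Y, mul_one]
  -- S i pairwise disjoint
  have hSd : ∀ i ∈ (univ : Finset (Fin m)), ∀ j ∈ univ, i ≠ j →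
      Disjoint (S i) (S j) := by
    intro i _ j _ hij
    rw [Finset.disjoint_left]
    intro R hRi hRj
    simp only [hS, mem_filter] at hRi hRj
    rcases hweak i j hij with h | h
    · obtain ⟨x, hx⟩ := h
      rw [mem_inter] at hx
      exact disjoint_left.1 hRj.2.2 hx.2 (hRi.2.1 hx.1)
    · obtain ⟨x, hx⟩ := h
      rw [mem_inter] at hx
      exact disjoint_left.1 hRi.2.2 hx.2 (hRj.2.1 hx.1)
  -- main inequality
  have hmain : (m : ℝ) * (p ^ a * q ^ b) ≤ 1 := by
    have h1 : ∑ i : Fin m, ∑ R ∈ S i, f R = (m : ℝ) * (p ^ a * q ^ b) := by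
      simp [hSsum]
    rw [← h1, ← sum_biUnion hSd, ← key X]
    apply sum_le_sum_of_subset_of_nonneg
    · intro R hR
      rw [mem_biUnion] at hR
      obtain ⟨i, _, hRi⟩ := hR
      simp only [hS, mem_filter] at hRi
      exact hRi.1
    · intro R _ _
      positivity
  -- conclude
  have hD : (0:ℝ) < ((a:ℝ)+b)^(a+b) := by positivity
  have hN : (0:ℝ) < (a:ℝ)^a * (b:ℝ)^b := by positivity
  have heq : p ^ a * q ^ b = ((a:ℝ)^a * (b:ℝ)^b) / (((a:ℝ)+b)^(a+b)) := by
    rw [hpdef, hqdef, div_pow, div_pow, pow_add]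
    field_simp
  rw [heq, ← mul_div_assoc, div_le_one hD] at hmain
  rw [le_div_iff₀ hN]
  exact hmain
end
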